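/- If n = pq for distinct primes p and q, then n+1 does not divide σ⁺(n), where σ⁺(pq) = (p+2)(q+2). -/

import Mathlib

/-- Sum of positive divisors. -/
def sigma (n : ℕ) : ℕ := ∑ d ∈ n.divisors, d

/-- σ⁺(n) = ∏_{p ∣ n} (σ(p^{v_p(n)}) + 1). -/
def sigmaPlus (n : ℕ) : ℕ := ∏ p ∈ n.primeFactors, (sigma (p ^ n.factorization p) + 1)

/-- φ⁺(n) = ∏_{p ∣ n} (φ(p^{v_p(n)}) + 1). -/
def phiPlus (n : ℕ) : ℕ := ∏ p ∈ n.primeFactors, (Nat.totient (p ^ n.factorization p) + 1)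

lemma sigma_prime {p : ℕ} (hp : p.Prime) : sigma p = p + 1 := by
  unfold sigma
  rw [hp.divisors]
  rw [Finset.sum_pair hp.one_lt.ne]
  omega

lemma sigmaPlus_eq (p q : ℕ) (hp : p.Prime) (hq : q.Prime) (hpq : p ≠ q) :
    sigmaPlus (p * q) = (p + 2) * (q + 2) := by
  unfold sigmaPlus
  have h1 : (p * q).primeFactors = {p, q} := by
    rw [Nat.primeFactors_mul hp.ne_zero hq.ne_zero, hp.primeFactors, hq.primeFactors]
    rfl
  have h2 : (p * q).factorization p = 1 := by
    rw [Nat.factorization_mul hp.ne_zero hq.ne_zero]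
    simp [hp.factorization, hq.factorization, Finsupp.single_apply, hpq, Ne.symm hpq]
  have h3 : (p * q).factorization q = 1 := by
    rw [Nat.factorization_mul hp.ne_zero hq.ne_zero]
    simp [hp.factorization, hq.factorization, Finsupp.single_apply, hpq, Ne.symm hpq]
  rw [h1, Finset.prod_pair hpq, h2, h3, pow_one, pow_one, sigma_prime hp, sigma_prime hq]

theorem stmt_3 (p q n : ℕ) (hp : p.Prime) (hq : q.Prime) (hpq : p ≠ q) (hn : n = p * q) :
    ¬ (n + 1) ∣ sigmaPlus n := by
  subst hn
  rw [sigmaPlus_eq p q hp hq hpq]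
  rintro ⟨k, hk⟩
  have hp2 := hp.two_le
  have hq2 := hq.two_le
  -- bound: (p+2)(q+2) < 3(pq+1)
  have h3 : p ≥ 3 ∨ q ≥ 3 := by
    rcases Nat.lt_or_ge p 3 with h | h
    · right
      interval_cases p <;> omega
    · left; exact h
  have hbound : (p + 2) * (q + 2) < 3 * (p * q + 1) := by
    rcases h3 with h | h <;> nlinarith
  have hk0 : k ≠ 0 := by
    rintro rfl
    simp at hk
  have hk3 : k < 3 := by
    by_contra h
    push_neg at h
    have : 3 * (p * q + 1) ≤ (p * q + 1) * k := by
      calc 3 * (p * q + 1) = (p * q + 1) * 3 := by ring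
      _ ≤ (p * q + 1) * k := Nat.mul_le_mul_left _ h
    omega
  have hk1 : 1 ≤ k := Nat.pos_of_ne_zero hk0
  interval_cases k
  · nlinarith
  · -- pq + 2p + 2q + 4 = 2pq + 2, so pq = 2p + 2q + 2 is even
    have heven : 2 ∣ p * q := ⟨p + q + 1, by nlinarith⟩
    rcases (Nat.Prime.dvd_mul Nat.prime_two).mp heven with h | h
    · have : p = 2 := ((Nat.prime_dvd_prime_iff_eq Nat.prime_two hp).mp h).symm
      subst this; nlinarith
    · have : q = 2 := ((Nat.prime_dvd_prime_iff_eq Nat.prime_two hq).mp h).symm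
      subst this; nlinarith
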